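/- Let R, R̂ : ℝ → Matrix (Fin 3) (Fin 3) ℝ and ω, ω̂ : ℝ → ℝ³. Suppose that for every t, R t and R̂ t lie in SO(3) (i.e. (R t)ᵀ * R t = 1, det (R t) = 1, and likewise for R̂ t), and that R and R̂ satisfy the kinematics HasDerivAt R (R t * S(ω t)) t and HasDerivAt R̂ (R̂ t * S(ω̂ t)) t. Define R̃ t := (R̂ t)ᵀ * R t and ω̃ t := ω t - (R̃ t)ᵀ *ᵥ ω̂ t. Then for every t, HasDerivAt R̃ (R̃ t * S(ω̃ t)) t; i.e. the attitude error satisfies the kinematic relation dR̃/dt = R̃ S(ω̃). -/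

import Mathlib

open Matrix
noncomputable section

/-- `ℝ³` as Euclidean space (vectors `Fin 3 → ℝ` with the Euclidean norm). -/
abbrev R3 : Type := EuclideanSpace ℝ (Fin 3)

/-- Skew-symmetric cross-product matrix `S(x)` of a vector `x ∈ ℝ³`. -/
def S (x : R3) : Matrix (Fin 3) (Fin 3) ℝ :=
  !![0, -x 2, x 1; x 2, 0, -x 0; -x 1, x 0, 0]

/-- Projection matrix `Π_y := I - y yᵀ` onto the plane orthogonal to `y`. -/
def proj (y : R3) : Matrix (Fin 3) (Fin 3) ℝ := 1 - Matrix.vecMulVec y y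

/-- Matrix–vector product, with the result regarded as an element of `ℝ³`
(so that `‖·‖` is the Euclidean norm). -/
def mulv (M : Matrix (Fin 3) (Fin 3) ℝ) (v : R3) : R3 := WithLp.toLp 2 (M.mulVec v)

/-- Cross product `×₃` regarded as an operation on `ℝ³`. -/
def cross (a b : R3) : R3 := WithLp.toLp 2 (WithLp.ofLp a ⨯₃ WithLp.ofLp b)

/-- Rodrigues rotation matrix `R(λ̊, λ) := I + 2 S(λ)(λ̊ I + S(λ))` of a
quaternion pair `(λ̊, λ)`. -/
def rod (q0 : ℝ) (qv : R3) : Matrix (Fin 3) (Fin 3) ℝ :=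
  1 + 2 • (S qv * (q0 • 1 + S qv))

attribute [local instance] Matrix.normedAddCommGroup Matrix.normedSpace

theorem matmul_deriv {f g : ℝ → Matrix (Fin 3) (Fin 3) ℝ} {f' g' : Matrix (Fin 3) (Fin 3) ℝ}
    {t : ℝ} (hf : HasDerivAt f f' t) (hg : HasDerivAt g g' t) :
    HasDerivAt (fun s => f s * g s) (f' * g t + f t * g') t := by
  have hfe : ∀ i j, HasDerivAt (fun s => f s i j) (f' i j) t := fun i j =>
    hasDerivAt_pi.1 (hasDerivAt_pi.1 hf i) j
  have hge : ∀ i j, HasDerivAt (fun s => g s i j) (g' i j) t := fun i j =>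
    hasDerivAt_pi.1 (hasDerivAt_pi.1 hg i) j
  apply hasDerivAt_pi.2; intro i; apply hasDerivAt_pi.2; intro j
  have : HasDerivAt (fun s => ∑ k, f s i k * g s k j)
      (∑ k, (f' i k * g t k j + f t i k * g' k j)) t :=
    HasDerivAt.fun_sum fun k _ => (hfe i k).mul (hge k j)
  have e1 : (fun s => (f s * g s) i j) = fun s => ∑ k, f s i k * g s k j := by
    funext s; simp [Matrix.mul_apply]
  have e2 : (f' * g t + f t * g') i j = ∑ k, (f' i k * g t k j + f t i k * g' k j) := by
    simp [Matrix.mul_apply, Matrix.add_apply, Finset.sum_add_distrib]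
  rw [show (fun x => (f x * g x) i j) = fun s => ∑ k, f s i k * g s k j from e1, e2]
  exact this

theorem transpose_deriv {f : ℝ → Matrix (Fin 3) (Fin 3) ℝ} {f' : Matrix (Fin 3) (Fin 3) ℝ}
    {t : ℝ} (hf : HasDerivAt f f' t) :
    HasDerivAt (fun s => (f s)ᵀ) f'ᵀ t := by
  apply hasDerivAt_pi.2; intro i; apply hasDerivAt_pi.2; intro j
  exact hasDerivAt_pi.1 (hasDerivAt_pi.1 hf j) i

theorem S_key {M : Matrix (Fin 3) (Fin 3) ℝ} (h1 : Mᵀ * M = 1) (h2 : M.det = 1)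
    {v : R3} : S (mulv Mᵀ v) = Mᵀ * S v * M := by
  have hinv : M⁻¹ = Mᵀ := Matrix.inv_eq_left_inv h1
  have hadj : Mᵀ = M.adjugate := by
    rw [← hinv, Matrix.inv_def, h2]; simp
  rw [Matrix.adjugate_fin_three] at hadj
  have h00 := congrFun (congrFun hadj 0) 0
  have h01 := congrFun (congrFun hadj 0) 1
  have h02 := congrFun (congrFun hadj 0) 2
  have h10 := congrFun (congrFun hadj 1) 0
  have h11 := congrFun (congrFun hadj 1) 1
  have h12 := congrFun (congrFun hadj 1) 2
  have h20 := congrFun (congrFun hadj 2) 0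
  have h21 := congrFun (congrFun hadj 2) 1
  have h22 := congrFun (congrFun hadj 2) 2
  simp [Matrix.transpose_apply] at h00 h01 h02 h10 h11 h12 h20 h21 h22
  ext i j
  fin_cases i <;> fin_cases j <;>
    simp [S, mulv, Matrix.mul_apply, Matrix.mulVec, dotProduct, Fin.sum_univ_three,
      Matrix.transpose_apply] <;>
    first
    | ring1
    | linear_combination (v 0) * h00 + (v 1) * h01 + (v 2) * h02
    | linear_combination -((v 0) * h00) - (v 1) * h01 - (v 2) * h02
    | linear_combination (v 0) * h10 + (v 1) * h11 + (v 2) * h12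
    | linear_combination -((v 0) * h10) - (v 1) * h11 - (v 2) * h12
    | linear_combination (v 0) * h20 + (v 1) * h21 + (v 2) * h22
    | linear_combination -((v 0) * h20) - (v 1) * h21 - (v 2) * h22

theorem S_transpose (x : R3) : (S x)ᵀ = -S x := by
  ext i j; fin_cases i <;> fin_cases j <;> simp [S]

theorem S_sub (a b : R3) : S (a - b) = S a - S b := by
  ext i j; fin_cases i <;> fin_cases j <;>
    simp [S, PiLp.sub_apply] <;> ring


/-- kinematics of the attitude error:
if `Ṙ = R S(ω)` and `R̂̇ = R̂ S(ω̂)` with `R, R̂ ∈ SO(3)`, then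
`R̃ := R̂ᵀ R` satisfies `R̃̇ = R̃ S(ω̃)` with `ω̃ := ω - R̃ᵀ ω̂`. -/
theorem stmt_12 (R Rh : ℝ → Matrix (Fin 3) (Fin 3) ℝ) (w wh : ℝ → R3)
    (hSO : ∀ t, (R t)ᵀ * R t = 1 ∧ (R t).det = 1)
    (hSOh : ∀ t, (Rh t)ᵀ * Rh t = 1 ∧ (Rh t).det = 1)
    (hR : ∀ t, HasDerivAt R (R t * S (w t)) t)
    (hRh : ∀ t, HasDerivAt Rh (Rh t * S (wh t)) t) :
    ∀ t, HasDerivAt (fun s => (Rh s)ᵀ * R s)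
      (((Rh t)ᵀ * R t) * S (w t - mulv ((Rh t)ᵀ * R t)ᵀ (wh t))) t := by
  intro t
  have hD := matmul_deriv (transpose_deriv (hRh t)) (hR t)
  set M := Rh t; set N := R t
  have hM1 : Mᵀ * M = 1 := (hSOh t).1
  have hN1 : Nᵀ * N = 1 := (hSO t).1
  have hMMt : M * Mᵀ = 1 := mul_eq_one_comm.mp hM1
  have hNNt : N * Nᵀ = 1 := mul_eq_one_comm.mp hN1
  set Rt := Mᵀ * N with hRt
  have hRt1 : Rtᵀ * Rt = 1 := by
    simp only [hRt, Matrix.transpose_mul, Matrix.transpose_transpose]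
    calc Nᵀ * M * (Mᵀ * N) = Nᵀ * (M * Mᵀ) * N := by
          rw [Matrix.mul_assoc, Matrix.mul_assoc, Matrix.mul_assoc]
      _ = 1 := by rw [hMMt, Matrix.mul_one, hN1]
  have hRtdet : Rt.det = 1 := by
    simp [hRt, Matrix.det_mul, (show M.det = 1 from (hSOh t).2), (show N.det = 1 from (hSO t).2)]
  have hRtRtT : Rt * Rtᵀ = 1 := mul_eq_one_comm.mp hRt1
  have hkey : S (mulv Rtᵀ (wh t)) = Rtᵀ * S (wh t) * Rt := S_key hRt1 hRtdet
  have : Rt * S (w t - mulv Rtᵀ (wh t)) =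
      (M * S (wh t))ᵀ * N + Mᵀ * (N * S (w t)) := by
    have e : Rt * (Rtᵀ * S (wh t) * Rt) = S (wh t) * Rt := by
      calc Rt * (Rtᵀ * S (wh t) * Rt) = (Rt * Rtᵀ) * (S (wh t) * Rt) := by
            simp only [Matrix.mul_assoc]
        _ = S (wh t) * Rt := by rw [hRtRtT, Matrix.one_mul]
    rw [S_sub, Matrix.mul_sub, hkey, e, Matrix.transpose_mul, S_transpose, hRt]
    noncomm_ring
  rw [this]
  exact hD
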